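/- Let H ∈ k⟦X⟧ and let T ∈ k⟦X⟧ satisfy: constant coefficient of T is 0 and coefficient of X in T is 1 (so T′ is a unit in k⟦X⟧ and T has a compositional inverse T^{∘−1}). Define H̃ = (T′)⁻¹·(H∘T). Then a power series Φ of order 1 satisfies H∘Φ = Φ′·H if and only if Φ̃ := T^{∘−1}∘Φ∘T satisfies H̃∘Φ̃ = Φ̃′·H̃. -/

import Mathlib

open PowerSeries

variable {k : Type*} [Field k] [CharZero k]

/-- Substitution of `g` (with zero constant coefficient) into `f`. -/
noncomputable def comp (f g : PowerSeries k) : PowerSeries k :=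
  PowerSeries.mk fun m => ∑ n ∈ Finset.range (m + 1),
    PowerSeries.coeff n f * PowerSeries.coeff m (g ^ n)

theorem coeff_comp (f g : PowerSeries k) (m : ℕ) :
    coeff m (comp f g) = ∑ n ∈ Finset.range (m + 1),
      coeff n f * coeff m (g ^ n) := by
  rw [comp, coeff_mk]

theorem coeff_pow_eq_zero {g : PowerSeries k} (hg : constantCoeff g = 0)
    {m n : ℕ} (h : m < n) : coeff m (g ^ n) = 0 := by
  have h1 : (X : PowerSeries k) ∣ g := X_dvd_iff.2 hg
  have h2 : (X : PowerSeries k) ^ n ∣ g ^ n := pow_dvd_pow_of_dvd h1 n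
  exact X_pow_dvd_iff.1 h2 m h

/-- coefficient of the image of a polynomial under `aeval g`. -/
theorem coeff_aeval (g : PowerSeries k) (hg : constantCoeff g = 0)
    (P : Polynomial k) (m : ℕ) :
    coeff m (Polynomial.aeval g P) = ∑ n ∈ Finset.range (m + 1),
      P.coeff n * coeff m (g ^ n) := by
  have h1 : P.natDegree < max (m + 1) (P.natDegree + 1) :=
    lt_of_lt_of_le (Nat.lt_succ_self _) (le_max_right _ _)
  rw [Polynomial.aeval_eq_sum_range' h1, map_sum]
  simp_rw [map_smul, smul_eq_mul]
  symm
  apply Finset.sum_subset (Finset.range_subset_range.2 (le_max_left _ _))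
  intro n _ hn'
  rw [Finset.mem_range, not_lt] at hn'
  rw [coeff_pow_eq_zero hg (Nat.lt_of_succ_le hn'), mul_zero]
set_option linter.unusedSectionVars false

/-- Key: coefficient of a composition equals coefficient of polynomial evaluation
of a sufficiently long truncation. -/
theorem coeff_comp_eq_coeff_aeval (f g : PowerSeries k) (hg : constantCoeff g = 0)
    {m N : ℕ} (hm : m < N) :
    coeff m (comp f g) = coeff m (Polynomial.aeval g (trunc N f)) := by
  rw [coeff_comp, coeff_aeval g hg]
  refine Finset.sum_congr rfl fun n hn => ?_
  rw [Finset.mem_range] at hn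
  rw [coeff_trunc, if_pos (lt_of_lt_of_le hn hm)]

theorem comp_coe (P : Polynomial k) (g : PowerSeries k) (hg : constantCoeff g = 0) :
    comp (P : PowerSeries k) g = Polynomial.aeval g P := by
  ext m
  rw [coeff_comp, coeff_aeval g hg]
  refine Finset.sum_congr rfl fun n _ => ?_
  rw [Polynomial.coeff_coe]

theorem comp_C (a : k) (g : PowerSeries k) (hg : constantCoeff g = 0) :
    comp (C a) g = C a := by
  have : (C a : PowerSeries k) = ((Polynomial.C a : Polynomial k) : PowerSeries k) := by
    rw [Polynomial.coe_C]
  rw [this, comp_coe _ _ hg, Polynomial.aeval_C, PowerSeries.algebraMap_apply,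
    Algebra.algebraMap_self, RingHom.id_apply]
  exact this

theorem comp_one (g : PowerSeries k) (hg : constantCoeff g = 0) :
    comp 1 g = 1 := by
  have := comp_C (1 : k) g hg
  rwa [map_one] at this

theorem comp_add (f₁ f₂ g : PowerSeries k) :
    comp (f₁ + f₂) g = comp f₁ g + comp f₂ g := by
  ext m
  simp only [coeff_comp, map_add, add_mul, Finset.sum_add_distrib]

theorem comp_mul (f₁ f₂ g : PowerSeries k) (hg : constantCoeff g = 0) :
    comp (f₁ * f₂) g = comp f₁ g * comp f₂ g := by
  ext m
  set P₁ := trunc (m + 1) f₁ with hP₁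
  set P₂ := trunc (m + 1) f₂ with hP₂
  have key : coeff m (Polynomial.aeval g (P₁ * P₂))
      = coeff m (comp (f₁ * f₂) g) := by
    rw [coeff_comp, coeff_aeval g hg]
    refine Finset.sum_congr rfl fun n hn => ?_
    rw [Finset.mem_range] at hn
    congr 1
    rw [Polynomial.coeff_mul, PowerSeries.coeff_mul]
    refine Finset.sum_congr rfl fun p hp => ?_
    rw [Finset.HasAntidiagonal.mem_antidiagonal] at hp
    have hp1 : p.1 < m + 1 := by omega
    have hp2 : p.2 < m + 1 := by omega
    rw [hP₁, hP₂, coeff_trunc, coeff_trunc, if_pos hp1, if_pos hp2]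
  rw [← key, map_mul, PowerSeries.coeff_mul, PowerSeries.coeff_mul]
  refine Finset.sum_congr rfl fun p hp => ?_
  rw [Finset.HasAntidiagonal.mem_antidiagonal] at hp
  have hp1 : p.1 < m + 1 := by omega
  have hp2 : p.2 < m + 1 := by omega
  rw [coeff_comp_eq_coeff_aeval f₁ g hg hp1, coeff_comp_eq_coeff_aeval f₂ g hg hp2]

theorem comp_pow (f g : PowerSeries k) (hg : constantCoeff g = 0) (n : ℕ) :
    comp (f ^ n) g = comp f g ^ n := by
  induction n with
  | zero => simpa using comp_one g hg
  | succ n ih => rw [pow_succ, pow_succ, comp_mul _ _ _ hg, ih]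

theorem comp_X_right (f : PowerSeries k) : comp f X = f := by
  ext m
  rw [coeff_comp]
  rw [Finset.sum_eq_single m]
  · rw [coeff_X_pow, if_pos rfl, mul_one]
  · intro n _ hn
    rw [coeff_X_pow, if_neg (fun h => hn h.symm), mul_zero]
  · intro h
    exact absurd (Finset.self_mem_range_succ m) h

theorem comp_X_left (g : PowerSeries k) (hg : constantCoeff g = 0) :
    comp X g = g := by
  have : (X : PowerSeries k) = ((Polynomial.X : Polynomial k) : PowerSeries k) := by
    rw [Polynomial.coe_X]
  rw [this, comp_coe _ _ hg, Polynomial.aeval_X]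

theorem constantCoeff_comp (f g : PowerSeries k) :
    constantCoeff (comp f g) = constantCoeff f := by
  rw [← coeff_zero_eq_constantCoeff_apply, ← coeff_zero_eq_constantCoeff_apply, coeff_comp]
  simp

theorem comp_aeval (P : Polynomial k) (g h : PowerSeries k)
    (hg : constantCoeff g = 0) (hh : constantCoeff h = 0) :
    comp (Polynomial.aeval g P) h = Polynomial.aeval (comp g h) P := by
  induction P using Polynomial.induction_on' with
  | add p q hp hq => rw [map_add, comp_add, hp, hq, map_add]
  | monomial n a =>
    simp only [Polynomial.aeval_monomial, PowerSeries.algebraMap_apply,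
      Algebra.algebraMap_self, RingHom.id_apply]
    rw [comp_mul _ _ _ hh, comp_C _ _ hh, comp_pow _ _ hh]

theorem comp_assoc (f g h : PowerSeries k)
    (hg : constantCoeff g = 0) (hh : constantCoeff h = 0) :
    comp (comp f g) h = comp f (comp g h) := by
  have hgh : constantCoeff (comp g h) = 0 := by rw [constantCoeff_comp, hg]
  ext m
  set P := trunc (m + 1) f with hP
  rw [coeff_comp_eq_coeff_aeval f (comp g h) hgh (Nat.lt_succ_self m), ← hP,
    ← comp_aeval P g h hg hh, coeff_comp, coeff_comp]
  refine Finset.sum_congr rfl fun n hn => ?_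
  rw [Finset.mem_range] at hn
  rw [coeff_comp_eq_coeff_aeval f g hg hn, ← hP]

theorem coeff_derivativeFun' (f : PowerSeries k) (n : ℕ) :
    coeff n (derivativeFun f) = coeff (n + 1) f * (n + 1) := coeff_derivative f n

theorem derivativeFun_C' (r : k) : derivativeFun (C r : PowerSeries k) = 0 := derivative_C

theorem derivativeFun_pow (g : PowerSeries k) (n : ℕ) :
    derivativeFun (g ^ (n + 1)) = (n + 1 : k⟦X⟧) * g ^ n * derivativeFun g := by
  induction n with
  | zero => simp [derivativeFun]
  | succ n ih =>
    rw [pow_succ, derivativeFun_mul, ih]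
    push_cast
    ring_nf

theorem derivativeFun_aeval (P : Polynomial k) (g : PowerSeries k) :
    derivativeFun (Polynomial.aeval g P)
      = Polynomial.aeval g (Polynomial.derivative P) * derivativeFun g := by
  induction P using Polynomial.induction_on' with
  | add p q hp hq => simp only [map_add, derivativeFun_add, hp, hq, add_mul]
  | monomial n a =>
    simp only [Polynomial.derivative_monomial, Polynomial.aeval_monomial,
      PowerSeries.algebraMap_apply, Algebra.algebraMap_self, RingHom.id_apply]
    cases n with
    | zero => simp [derivativeFun_C']
    | succ n =>
      rw [derivativeFun_mul, derivativeFun_C', derivativeFun_pow]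
      push_cast
      rw [smul_eq_mul, smul_eq_mul]
      simp only [Nat.add_sub_cancel, map_mul, map_natCast, map_add, map_one]
      ring

/-- Chain rule for composition of power series. -/
theorem derivativeFun_comp (f g : PowerSeries k) (hg : constantCoeff g = 0) :
    derivativeFun (comp f g) = comp (derivativeFun f) g * derivativeFun g := by
  ext m
  set P := trunc (m + 2) f with hP
  rw [coeff_derivativeFun', coeff_comp_eq_coeff_aeval f g hg (by omega : m + 1 < m + 2), ← hP,
    ← coeff_derivativeFun', derivativeFun_aeval, PowerSeries.coeff_mul, PowerSeries.coeff_mul]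
  refine Finset.sum_congr rfl fun p hp => ?_
  rw [Finset.HasAntidiagonal.mem_antidiagonal] at hp
  have hp1 : p.1 < m + 1 := by omega
  congr 1
  rw [coeff_aeval g hg, coeff_comp]
  refine Finset.sum_congr rfl fun n hn => ?_
  rw [Finset.mem_range] at hn
  rw [Polynomial.coeff_derivative, hP, coeff_trunc, if_pos (by omega : n + 1 < m + 2),
    coeff_derivativeFun']

theorem comp_inv (u g : PowerSeries k) (hu : constantCoeff u ≠ 0)
    (hg : constantCoeff g = 0) : comp u⁻¹ g = (comp u g)⁻¹ := by
  have hcu : constantCoeff (comp u g) ≠ 0 := by rwa [constantCoeff_comp]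
  rw [PowerSeries.eq_inv_iff_mul_eq_one hcu, ← comp_mul _ _ _ hg,
    PowerSeries.inv_mul_cancel u hu, comp_one g hg]

theorem derivativeFun_X' : derivativeFun (X : k⟦X⟧) = 1 := derivative_X

/-- Forward direction of the conjugation theorem. -/
theorem aj_fwd (H T Tinv Φ : PowerSeries k)
    (hT0 : constantCoeff T = 0) (hT1 : coeff 1 T = 1)
    (hTTinv : comp T Tinv = X) (hTinvT : comp Tinv T = X)
    (hΦ0 : constantCoeff Φ = 0)
    (hAJ : comp H Φ = derivativeFun Φ * H) :
    comp ((derivativeFun T)⁻¹ * comp H T) (comp (comp Tinv Φ) T)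
      = derivativeFun (comp (comp Tinv Φ) T)
          * ((derivativeFun T)⁻¹ * comp H T) := by
  have hTinv0 : constantCoeff Tinv = 0 := by
    have h := congrArg (constantCoeff) hTinvT
    rwa [constantCoeff_comp, constantCoeff_X] at h
  have hA0 : constantCoeff (comp Tinv Φ) = 0 := by rw [constantCoeff_comp, hTinv0]
  have hψ0 : constantCoeff (comp (comp Tinv Φ) T) = 0 := by rw [constantCoeff_comp, hA0]
  have hT'ne : constantCoeff (derivativeFun T) ≠ 0 := by
    rw [← coeff_zero_eq_constantCoeff_apply, coeff_derivativeFun']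
    simp [hT1]
  have hchain : comp (derivativeFun T) Tinv * derivativeFun Tinv = 1 := by
    have h := derivativeFun_comp T Tinv hTinv0
    rw [hTTinv, derivativeFun_X'] at h
    exact h.symm
  have key1 : comp T (comp (comp Tinv Φ) T) = comp Φ T := by
    rw [← comp_assoc T (comp Tinv Φ) T hA0 hT0, ← comp_assoc T Tinv Φ hTinv0 hΦ0,
      hTTinv, comp_X_left Φ hΦ0]
  have hccψ' : constantCoeff (comp (derivativeFun T) (comp (comp Tinv Φ) T)) ≠ 0 := by
    rwa [constantCoeff_comp]
  have hinv : (comp (derivativeFun T) (comp (comp Tinv Φ) T))⁻¹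
      = comp (comp (derivativeFun Tinv) Φ) T := by
    rw [PowerSeries.inv_eq_iff_mul_eq_one hccψ',
      ← comp_assoc (derivativeFun T) (comp Tinv Φ) T hA0 hT0,
      ← comp_assoc (derivativeFun T) Tinv Φ hTinv0 hΦ0,
      ← comp_mul _ _ _ hT0, ← comp_mul _ _ _ hΦ0, mul_comm (derivativeFun Tinv),
      hchain, comp_one Φ hΦ0, comp_one T hT0]
  -- expand the left-hand side
  rw [comp_mul _ _ _ hψ0, comp_inv _ _ hT'ne hψ0, hinv,
    comp_assoc H T _ hT0 hψ0, key1, ← comp_assoc H Φ T hΦ0 hT0, hAJ,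
    comp_mul _ _ _ hT0,
    -- expand the right-hand side
    derivativeFun_comp _ T hT0, derivativeFun_comp Tinv Φ hΦ0,
    comp_mul _ _ _ hT0]
  have hTT : derivativeFun T * (derivativeFun T)⁻¹ = 1 :=
    PowerSeries.mul_inv_cancel _ hT'ne
  linear_combination (-1 : PowerSeries k) * (comp (comp (derivativeFun Tinv) Φ) T * comp (derivativeFun Φ) T
    * comp H T) * hTT

theorem coeff_one_comp (f g : PowerSeries k) :
    coeff 1 (comp f g) = coeff 1 f * coeff 1 g := by
  rw [coeff_comp]
  simp [Finset.sum_range_succ, coeff_one]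

/-- Conjugating by a normalized `T` (with compositional inverse `Tinv`)
transforms the Aczél–Jabotinsky equation with generator `H` into the one
with generator `H̃ = (T′)⁻¹ · (H ∘ T)`. -/
theorem aczel_jabotinsky_conjugation (H T Tinv : PowerSeries k)
    (hT0 : constantCoeff T = 0) (hT1 : coeff 1 T = 1)
    (hTTinv : comp T Tinv = X) (hTinvT : comp Tinv T = X)
    (Φ : PowerSeries k) (hΦ0 : constantCoeff Φ = 0) (hΦ1 : coeff 1 Φ ≠ 0) :
    comp H Φ = derivativeFun Φ * H ↔
      comp ((derivativeFun T)⁻¹ * comp H T) (comp (comp Tinv Φ) T)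
        = derivativeFun (comp (comp Tinv Φ) T)
            * ((derivativeFun T)⁻¹ * comp H T) := by
  have hTinv0 : constantCoeff Tinv = 0 := by
    have h := congrArg (constantCoeff) hTinvT
    rwa [constantCoeff_comp, constantCoeff_X] at h
  have hTinv1 : coeff 1 Tinv = 1 := by
    have h := congrArg (coeff 1) hTinvT
    rwa [coeff_one_comp, hT1, mul_one, coeff_one_X] at h
  have hA0 : constantCoeff (comp Tinv Φ) = 0 := by rw [constantCoeff_comp, hTinv0]
  have hψ0 : constantCoeff (comp (comp Tinv Φ) T) = 0 := by rw [constantCoeff_comp, hA0]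
  have hT'ne : constantCoeff (derivativeFun T) ≠ 0 := by
    rw [← coeff_zero_eq_constantCoeff_apply, coeff_derivativeFun']
    simp [hT1]
  have hchain : comp (derivativeFun T) Tinv * derivativeFun Tinv = 1 := by
    have h := derivativeFun_comp T Tinv hTinv0
    rw [hTTinv, derivativeFun_X'] at h
    exact h.symm
  constructor
  · exact aj_fwd H T Tinv Φ hT0 hT1 hTTinv hTinvT hΦ0
  · intro hAJ
    have h := aj_fwd ((derivativeFun T)⁻¹ * comp H T) Tinv T
      (comp (comp Tinv Φ) T) hTinv0 hTinv1 hTinvT hTTinv hψ0 hAJ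
    -- simplify the conjugated series back to `Φ`
    have key1 : comp T (comp (comp Tinv Φ) T) = comp Φ T := by
      rw [← comp_assoc T (comp Tinv Φ) T hA0 hT0, ← comp_assoc T Tinv Φ hTinv0 hΦ0,
        hTTinv, comp_X_left Φ hΦ0]
    have e1 : comp (comp T (comp (comp Tinv Φ) T)) Tinv = Φ := by
      rw [key1, comp_assoc Φ T Tinv hT0 hTinv0, hTTinv, comp_X_right]
    -- simplify the conjugated generator back to `H`
    have e2 : (derivativeFun Tinv)⁻¹
        * comp ((derivativeFun T)⁻¹ * comp H T) Tinv = H := by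
      rw [comp_mul _ _ _ hTinv0, comp_inv _ _ hT'ne hTinv0,
        comp_assoc H T Tinv hT0 hTinv0, hTTinv, comp_X_right,
        ← mul_assoc, ← PowerSeries.mul_inv_rev, hchain, inv_one, one_mul]
    rw [e1, e2] at h
    exact h
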